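/- Let E be a real inner product space, t a natural number, v_1, …, v_t ∈ E, λ ≥ 0 and B ≥ 0 real numbers. Define g : E → E by g(θ) = λ·θ + Σ_{τ=1}^t s(⟨θ, v_τ⟩)·v_τ. If θ₁, θ₂ ∈ E satisfy |⟨θ_i, v_τ⟩| ≤ B for all τ ∈ {1,…,t} and i ∈ {1,2}, then ⟨g(θ₂) − g(θ₁), θ₂ − θ₁⟩ ≥ λ·‖θ₂ − θ₁‖² + s(B)·(1 − s(B)) · Σ_{τ=1}^t ⟨θ₂ − θ₁, v_τ⟩². -/

import Mathlib

open scoped RealInnerProductSpace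

noncomputable def sigmoid (z : ℝ) : ℝ := 1 / (1 + Real.exp (-z))

lemma one_add_exp_pos (z : ℝ) : 0 < 1 + Real.exp (-z) := by positivity

lemma sigmoid_hasDerivAt (z : ℝ) :
    HasDerivAt sigmoid (Real.exp (-z) / (1 + Real.exp (-z))^2) z := by
  have h : HasDerivAt (fun z : ℝ => 1 + Real.exp (-z)) (-Real.exp (-z)) z := by
    simpa using (Real.hasDerivAt_exp (-z)).comp z ((hasDerivAt_id z).neg) |>.const_add 1
  have := h.inv (ne_of_gt (one_add_exp_pos z))
  have e : sigmoid = fun z : ℝ => (1 + Real.exp (-z))⁻¹ := by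
    funext x; simp [sigmoid, one_div]
  rw [e]
  have h2 : HasDerivAt (fun z : ℝ => (1 + Real.exp (-z))⁻¹) (-(-Real.exp (-z)) / (1 + Real.exp (-z))^2) z := this
  rw [neg_neg] at h2
  exact h2

lemma myderiv_eq (z : ℝ) :
    Real.exp (-z) / (1 + Real.exp (-z))^2 = 1 / (2 + Real.exp z + Real.exp (-z)) := by
  have h1 : Real.exp z * Real.exp (-z) = 1 := by
    rw [← Real.exp_add]; simp
  rw [div_eq_div_iff (by positivity) (by positivity)]
  ring_nf
  nlinarith [Real.exp_pos z, Real.exp_pos (-z)]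

lemma sig_mul (B : ℝ) : sigmoid B * (1 - sigmoid B) = 1 / (2 + Real.exp B + Real.exp (-B)) := by
  have h1 : Real.exp B * Real.exp (-B) = 1 := by rw [← Real.exp_add]; simp
  have h2 := one_add_exp_pos B
  simp only [sigmoid]
  field_simp [sigmoid]
  nlinarith [Real.exp_pos B, Real.exp_pos (-B)]

lemma deriv_ge {B z : ℝ} (hz : |z| ≤ B) :
    sigmoid B * (1 - sigmoid B) ≤ Real.exp (-z) / (1 + Real.exp (-z))^2 := by
  rw [sig_mul, myderiv_eq]
  apply one_div_le_one_div_of_le (by positivity)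
  have : Real.cosh z ≤ Real.cosh B := by
    rw [Real.cosh_le_cosh]
    calc |z| ≤ B := hz
    _ ≤ |B| := le_abs_self B
  rw [Real.cosh_eq, Real.cosh_eq] at this
  linarith

lemma key {B : ℝ} (a b : ℝ) (ha : |a| ≤ B) (hb : |b| ≤ B) :
    sigmoid B * (1 - sigmoid B) * (b - a)^2 ≤ (sigmoid b - sigmoid a) * (b - a) := by
  -- wlog a ≤ b
  rcases lt_trichotomy a b with h | h | h
  · obtain ⟨c, hc, hc2⟩ := exists_hasDerivAt_eq_slope sigmoid
      (fun z => Real.exp (-z) / (1 + Real.exp (-z))^2) h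
      (fun z _ => (sigmoid_hasDerivAt z).continuousAt.continuousWithinAt)
      (fun z _ => sigmoid_hasDerivAt z)
    have hcB : |c| ≤ B := by
      rw [abs_le]; rw [abs_le] at ha hb
      constructor <;> [linarith [hc.1]; linarith [hc.2]]
    have hd := deriv_ge hcB
    have hba : 0 < b - a := by linarith
    have : sigmoid b - sigmoid a = (Real.exp (-c) / (1 + Real.exp (-c))^2) * (b - a) := by
      field_simp at hc2 ⊢; linarith [hc2]
    rw [this]
    nlinarith
  · simp [h]
  · obtain ⟨c, hc, hc2⟩ := exists_hasDerivAt_eq_slope sigmoid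
      (fun z => Real.exp (-z) / (1 + Real.exp (-z))^2) h
      (fun z _ => (sigmoid_hasDerivAt z).continuousAt.continuousWithinAt)
      (fun z _ => sigmoid_hasDerivAt z)
    have hcB : |c| ≤ B := by
      rw [abs_le]; rw [abs_le] at ha hb
      constructor <;> [linarith [hc.1]; linarith [hc.2]]
    have hd := deriv_ge hcB
    have hba : 0 < a - b := by linarith
    have : sigmoid a - sigmoid b = (Real.exp (-c) / (1 + Real.exp (-c))^2) * (a - b) := by
      field_simp at hc2 ⊢; linarith [hc2]
    nlinarith

theorem inner_gradient_difference_lower_bound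
    (E : Type*) [NormedAddCommGroup E] [InnerProductSpace ℝ E]
    (t : ℕ) (v : Fin t → E) (lam B : ℝ) (hlam : 0 ≤ lam) (hB : 0 ≤ B)
    (g : E → E) (hg : ∀ θ, g θ = lam • θ + ∑ τ, sigmoid ⟪θ, v τ⟫ • v τ)
    (θ₁ θ₂ : E)
    (h₁ : ∀ τ, |⟪θ₁, v τ⟫| ≤ B) (h₂ : ∀ τ, |⟪θ₂, v τ⟫| ≤ B) :
    lam * ‖θ₂ - θ₁‖ ^ 2 +
        sigmoid B * (1 - sigmoid B) * ∑ τ, ⟪θ₂ - θ₁, v τ⟫ ^ 2 ≤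
      ⟪g θ₂ - g θ₁, θ₂ - θ₁⟫ := by
  have expand : ⟪g θ₂ - g θ₁, θ₂ - θ₁⟫ = lam * ‖θ₂ - θ₁‖^2 +
      ∑ τ, (sigmoid ⟪θ₂, v τ⟫ - sigmoid ⟪θ₁, v τ⟫) * ⟪θ₂ - θ₁, v τ⟫ := by
    rw [hg, hg]
    have : lam • θ₂ + ∑ τ, sigmoid ⟪θ₂, v τ⟫ • v τ - (lam • θ₁ + ∑ τ, sigmoid ⟪θ₁, v τ⟫ • v τ)
        = lam • (θ₂ - θ₁) + ∑ τ, (sigmoid ⟪θ₂, v τ⟫ - sigmoid ⟪θ₁, v τ⟫) • v τ := by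
      rw [Finset.sum_congr rfl (fun τ _ => sub_smul _ _ _), Finset.sum_sub_distrib, smul_sub]
      abel
    rw [this, inner_add_left, real_inner_smul_left, sum_inner, real_inner_self_eq_norm_sq]
    congr 1
    exact Finset.sum_congr rfl fun τ _ => by
      rw [real_inner_smul_left, real_inner_comm (v τ) (θ₂ - θ₁)]
  rw [expand]
  gcongr
  rw [Finset.mul_sum]
  apply Finset.sum_le_sum
  intro τ _
  have := key (B := B) ⟪θ₁, v τ⟫ ⟪θ₂, v τ⟫ (h₁ τ) (h₂ τ)
  have e : ⟪θ₂, v τ⟫ - ⟪θ₁, v τ⟫ = ⟪θ₂ - θ₁, v τ⟫ := (inner_sub_left _ _ _).symm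
  rw [e] at this
  linarith [this]
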